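/- Let X be a metric space, n ∈ ℕ ∪ {∞}, and S a set of cardinality bigger than card(X × ℕ). If there exist functions α : (0,∞) → (0,∞) and M : (0,∞) × (0,∞) → (0,∞) such that LsExtDim(X, α, M) ≤ n, then for each ε > 0 there is an (ε,ε)-Lipschitz partition of unity f : X → Δ(S)^(n) such that the family {f⁻¹(st(v))}_{v∈S} is uniformly bounded. -/

import Mathlib

universe u

/-- The `l¹` distance between two (finitely supported) functions `S → ℝ`,
modeling the metric of `Δ(S) ⊆ l¹(S)`. -/
noncomputable def l1dist {S : Type*} (φ ψ : S → ℝ) : ℝ := ∑ᶠ v, |φ v - ψ v|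

/-- `φ` is a point of `Δ(S)`. -/
def IsDelta {S : Type*} (φ : S → ℝ) : Prop :=
  (∀ v, 0 ≤ φ v) ∧ (Function.support φ).Finite ∧ ∑ᶠ v, φ v = 1

/-- `φ` is a point of the `n`-skeleton `Δ(S)⁽ⁿ⁾` (with `Δ(S)⁽∞⁾ = Δ(S)`):
its support has cardinality at most `n + 1`. -/
def IsDeltaSkel {S : Type*} (n : ℕ∞) (φ : S → ℝ) : Prop :=
  IsDelta φ ∧ (Function.support φ).encard ≤ n + 1

/-- `f` is a partition of unity on `A` with values in `Δ(S)⁽ⁿ⁾`. -/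
def PartUnitySkelOn {X S : Type*} (n : ℕ∞) (f : X → S → ℝ) (A : Set X) : Prop :=
  ∀ a ∈ A, IsDeltaSkel n (f a)

/-- `f` is `(ε,ε)`-Lipschitz on `A` (with respect to the `l¹` metric on `Δ(S)`). -/
def LipschitzEpsOn {X S : Type*} [MetricSpace X] (ε : ℝ) (f : X → S → ℝ) (A : Set X) : Prop :=
  ∀ x ∈ A, ∀ y ∈ A, l1dist (f x) (f y) ≤ ε * dist x y + ε

/-- `f` is `K`-cobounded on `A`: for every vertex `v`, the preimage of the star of `v`
has diameter at most `K`. -/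
def CoboundedOn {X S : Type*} [MetricSpace X] (K : ℝ) (f : X → S → ℝ) (A : Set X) : Prop :=
  ∀ v : S, EMetric.diam {x ∈ A | 0 < f x v} ≤ ENNReal.ofReal K

/-- `LsExtDim(X, α, M) ≤ n` (Definition 6.2): for any set `S` of cardinality bigger than
`card(X × ℕ)`, any `K > 0`, any `δ ∈ Dα`, every `(α δ, α δ)`-Lipschitz `K`-cobounded
partition of unity `f : A → Δ(S)⁽ⁿ⁾`, `A ⊆ X`, extends to a `(δ,δ)`-Lipschitz
`M δ K`-cobounded partition of unity `g : X → Δ(S)⁽ⁿ⁾`. -/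
def LsExtDimLE (X : Type u) [MetricSpace X] (n : ℕ∞) (Dα : Set ℝ)
    (α : ℝ → ℝ) (M : ℝ → ℝ → ℝ) : Prop :=
  ∀ S : Type u, Cardinal.mk (X × ℕ) < Cardinal.mk S →
    ∀ K : ℝ, 0 < K → ∀ δ ∈ Dα, ∀ (A : Set X) (f : X → S → ℝ),
      PartUnitySkelOn n f A → LipschitzEpsOn (α δ) f A → CoboundedOn K f A →
      ∃ g : X → S → ℝ, (∀ a ∈ A, g a = f a) ∧ PartUnitySkelOn n g Set.univ ∧
        LipschitzEpsOn δ g Set.univ ∧ CoboundedOn (M δ K) g Set.univ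

/-- Theorem 6.4, (2) ⇒ (1). If `LsExtDim(X, α, M) ≤ n` for some
`α : (0,∞) → (0,∞)` and `M : (0,∞) × (0,∞) → (0,∞)`, then for each `ε > 0` there is an
`(ε,ε)`-Lipschitz partition of unity `f : X → Δ(S)⁽ⁿ⁾` with `{f⁻¹(st v)}` uniformly
bounded. -/
theorem stmt8 {X : Type u} [MetricSpace X] (n : ℕ∞) (S : Type u)
    (hS : Cardinal.mk (X × ℕ) < Cardinal.mk S)
    (h : ∃ α : ℝ → ℝ, ∃ M : ℝ → ℝ → ℝ, (∀ δ > (0:ℝ), 0 < α δ) ∧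
      (∀ δ > (0:ℝ), ∀ K > (0:ℝ), 0 < M δ K) ∧ LsExtDimLE X n (Set.Ioi 0) α M) :
    ∀ ε > (0:ℝ), ∃ f : X → S → ℝ, PartUnitySkelOn n f Set.univ ∧
      LipschitzEpsOn ε f Set.univ ∧ ∃ M' : ℝ, 0 < M' ∧ CoboundedOn M' f Set.univ := by
  intro ε hε
  obtain ⟨α, M, hα, hM, hL⟩ := h
  obtain ⟨g, _, hg1, hg2, hg3⟩ :=
    hL S hS 1 one_pos ε hε (∅ : Set X) (fun _ _ => 0)
      (fun a ha => absurd ha (Set.notMem_empty a))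
      (fun x hx => absurd hx (Set.notMem_empty x))
      (fun v => by
        convert (show EMetric.diam (∅ : Set X) ≤ ENNReal.ofReal 1 from EMetric.diam_empty.le.trans zero_le)
        ext x; simp)
  exact ⟨g, hg1, hg2, M ε 1, hM ε hε 1 one_pos, hg3⟩
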